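/- Let $D_t$ be a smooth affine variety over $\mathbb{C}$ and $f$ a regular function on $D_t$ with finitely many critical points, all isolated. Then $f$ restricted to $D_t$ is a Morse function (all critical points non-degenerate and all critical values pairwise distinct) if and only if the quotient ring $\mathbb{C}[D_t]/J_f$ (where $J_f$ is the Jacobian ideal of $f$) is generated as a $\mathbb{C}$-vector space by the powers $1, f, f^2, \dots$ of $f$. -/

import Mathlib

open Polynomial

/-- A nonzero vector in a vector space admits a linear functional sending it to `1`. -/
lemma aux_exists_functional {K V : Type*} [Field K] [AddCommGroup V] [Module K V]
    {v : V} (hv : v ≠ 0) : ∃ ℓ : V →ₗ[K] K, ℓ v = 1 := by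
  obtain ⟨g, hg⟩ := (LinearMap.toSpanSingleton K V v).exists_leftInverse_of_injective
    (LinearMap.ker_toSpanSingleton K hv)
  refine ⟨g, ?_⟩
  have := LinearMap.congr_fun hg 1
  simpa using this

/-- If every maximal ideal `M` satisfies `M ≤ M * M`, then an element lying in every
maximal ideal is zero. -/
lemma aux_eq_zero {A : Type*} [CommRing A] [IsNoetherianRing A]
    (hM : ∀ M : Ideal A, M.IsMaximal → M ≤ M * M)
    {x : A} (hx : ∀ M : Ideal A, M.IsMaximal → x ∈ M) : x = 0 := by
  by_contra hx0
  have hann : Ideal.torsionOf A A x ≠ ⊤ := by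
    simpa [Ideal.torsionOf_eq_top_iff] using hx0
  obtain ⟨M, hMmax, hle⟩ := Ideal.exists_le_maximal _ hann
  obtain ⟨r, hr1, hr0⟩ := Submodule.exists_sub_one_mem_and_smul_eq_zero_of_fg_of_le_smul
    M M (IsNoetherian.noetherian _) (by rw [Ideal.smul_eq_mul]; exact hM M hMmax)
  have hrx : r • x = 0 := hr0 x (hx M hMmax)
  have hrM : r ∈ M := hle (by rwa [Ideal.mem_torsionOf_iff])
  have : (1 : A) ∈ M := by
    have := M.sub_mem hrM hr1
    simpa using this
  exact hMmax.ne_top ((Ideal.eq_top_iff_one M).mpr this)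

/-- The residue field at a maximal ideal of a `ℂ`-algebra is `ℂ`, provided the quotient
is finite dimensional. -/
lemma aux_residue {A : Type*} [CommRing A] [Algebra ℂ A]
    (M : Ideal A) (hM : M.IsMaximal) [FiniteDimensional ℂ (A ⧸ M)] :
    Function.Bijective (algebraMap ℂ (A ⧸ M)) := by
  haveI := hM
  letI : Field (A ⧸ M) := Ideal.Quotient.field M
  exact ⟨(algebraMap ℂ (A ⧸ M)).injective,
    IsAlgClosed.algebraMap_bijective_of_isIntegral.2⟩

/-- Representation of an arbitrary element modulo `Jf` as a polynomial in `f`,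
given that powers of `f` span the quotient. -/
lemma aux_poly {R : Type*} [CommRing R] [Algebra ℂ R] {Jf : Ideal R} {f : R}
    (hspan : Submodule.span ℂ (Set.range fun k : ℕ => (Ideal.Quotient.mk Jf f) ^ k) = ⊤)
    (x : R) : ∃ P : ℂ[X], x - aeval f P ∈ Jf := by
  have hx : Ideal.Quotient.mk Jf x ∈
      Submodule.span ℂ (Set.range fun k : ℕ => (Ideal.Quotient.mk Jf f) ^ k) := by
    rw [hspan]; trivial
  rw [Finsupp.mem_span_range_iff_exists_finsupp] at hx
  obtain ⟨l, hl⟩ := hx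
  refine ⟨l.sum fun k c => C c * X ^ k, ?_⟩
  have hmk : Ideal.Quotient.mk Jf (aeval f (l.sum fun k c => C c * X ^ k))
      = Ideal.Quotient.mk Jf x := by
    have h1 : aeval f (l.sum fun k c => C c * X ^ k) = l.sum fun k c => c • f ^ k := by
      rw [map_finsuppSum]
      refine Finsupp.sum_congr fun k _ => ?_
      simp [Algebra.smul_def]
    rw [h1, ← hl, map_finsuppSum]
    refine Finsupp.sum_congr fun k _ => ?_
    rw [Algebra.smul_def, map_mul, Ideal.Quotient.mk_algebraMap, map_pow, ← Algebra.smul_def]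
  have h2 := Jf.neg_mem (Ideal.Quotient.eq.mp hmk)
  rwa [neg_sub] at h2

/-- Splitting off the value of the polynomial at the critical value. -/
lemma aux_split {R : Type*} [CommRing R] [Algebra ℂ R] {Jf 𝔪 : Ideal R} {f x : R}
    (hm : 𝔪.IsMaximal) (hJm : Jf ≤ 𝔪) {c : ℂ} (hfc : f - algebraMap ℂ R c ∈ 𝔪)
    (hx : x ∈ 𝔪) {P : ℂ[X]} (hP : x - aeval f P ∈ Jf) :
    ∃ Q : ℂ[X], x - (f - algebraMap ℂ R c) * aeval f Q ∈ Jf := by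
  obtain ⟨Q, hQ⟩ := dvd_iff_isRoot.mpr (show IsRoot (P - C (P.eval c)) c by simp)
  have hPf : aeval f P = algebraMap ℂ R (P.eval c)
      + (f - algebraMap ℂ R c) * aeval f Q := by
    have h1 := congrArg (aeval f) hQ
    simp only [map_sub, map_mul, aeval_C, aeval_X] at h1
    linear_combination h1
  have hmemP : aeval f P ∈ 𝔪 := by
    have : aeval f P = x - (x - aeval f P) := by ring
    rw [this]
    exact 𝔪.sub_mem hx (hJm hP)
  have h1 : algebraMap ℂ R (P.eval c) ∈ 𝔪 := by
    have : algebraMap ℂ R (P.eval c)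
        = aeval f P - (f - algebraMap ℂ R c) * aeval f Q := by
      rw [hPf]; ring
    rw [this]
    exact 𝔪.sub_mem hmemP (Ideal.mul_mem_right _ _ hfc)
  have h0 : P.eval c = 0 := by
    by_contra hc0
    exact hm.ne_top (Ideal.eq_top_of_isUnit_mem _ h1
      ((isUnit_iff_ne_zero.2 hc0).map (algebraMap ℂ R)))
  refine ⟨Q, ?_⟩
  have : x - (f - algebraMap ℂ R c) * aeval f Q = x - aeval f P := by
    rw [hPf, h0, map_zero, zero_add]
  rw [this]; exact hP

/-- Key smoothness lemma: at a maximal ideal with residue field `ℂ`, an element of `𝔪`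
all of whose derivatives lie in `𝔪` is in `𝔪 * 𝔪`. -/
lemma aux_smooth {R : Type} [CommRing R] [Algebra ℂ R] [Algebra.FormallySmooth ℂ R]
    (𝔪 : Ideal R) (hm : 𝔪.IsMaximal)
    (hbij : Function.Bijective (algebraMap ℂ (R ⧸ 𝔪)))
    {g : R} (hg : g ∈ 𝔪) (hder : ∀ ξ : Derivation ℂ R R, ξ g ∈ 𝔪) :
    g ∈ 𝔪 * 𝔪 := by
  by_contra hgsq
  classical
  let e : ℂ ≃ₐ[ℂ] (R ⧸ 𝔪) := AlgEquiv.ofBijective (Algebra.ofId ℂ (R ⧸ 𝔪)) hbij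
  have he : ∀ c : ℂ, e c = algebraMap ℂ (R ⧸ 𝔪) c := fun c => rfl
  let τ : R →ₗ[ℂ] ℂ := e.symm.toLinearMap ∘ₗ (Ideal.Quotient.mkₐ ℂ 𝔪).toLinearMap
  have hττ : ∀ x : R, τ x = e.symm (Ideal.Quotient.mk 𝔪 x) := fun x => rfl
  have hτ_mk : ∀ x : R, algebraMap ℂ (R ⧸ 𝔪) (τ x) = Ideal.Quotient.mk 𝔪 x := by
    intro x
    rw [hττ, ← he]
    exact e.apply_symm_apply _
  have hτ_mul : ∀ x y : R, τ (x * y) = τ x * τ y := by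
    intro x y
    simp [hττ, map_mul]
  -- the "reduction mod constants" map
  let σ : R →ₗ[ℂ] R := LinearMap.id - (Algebra.linearMap ℂ R ∘ₗ τ)
  have hσ : ∀ x : R, σ x = x - algebraMap ℂ R (τ x) := fun x => rfl
  have hσ_mem : ∀ x : R, σ x ∈ 𝔪 := by
    intro x
    rw [← Ideal.Quotient.eq_zero_iff_mem, hσ, map_sub, Ideal.Quotient.mk_algebraMap,
      hτ_mk, sub_self]
  -- functional killing 𝔪 * 𝔪 and sending g to 1
  let N : Submodule ℂ R := Submodule.restrictScalars ℂ (𝔪 * 𝔪 : Ideal R)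
  let π : R →ₗ[ℂ] R ⧸ N := N.mkQ
  have hπ_zero : ∀ x : R, x ∈ (𝔪 * 𝔪 : Ideal R) → π x = 0 := by
    intro x hxm
    exact (Submodule.Quotient.mk_eq_zero N).mpr hxm
  have hπg : π g ≠ 0 := by
    simp only [π, Submodule.mkQ_apply, ne_eq, Submodule.Quotient.mk_eq_zero]
    exact hgsq
  obtain ⟨ℓ, hℓ⟩ := aux_exists_functional (K := ℂ) hπg
  -- the derivation into the residue field
  let Dlin : R →ₗ[ℂ] R ⧸ 𝔪 := (Algebra.linearMap ℂ (R ⧸ 𝔪)) ∘ₗ (ℓ ∘ₗ (π ∘ₗ σ))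
  have hD : ∀ x : R, Dlin x = algebraMap ℂ (R ⧸ 𝔪) (ℓ (π (σ x))) := fun x => rfl
  have hsmul : ∀ (r : R) (q : R ⧸ 𝔪), r • q = Ideal.Quotient.mk 𝔪 r * q := by
    intro r q
    obtain ⟨w, rfl⟩ := Ideal.Quotient.mk_surjective q
    rw [← map_mul, ← smul_eq_mul]
    rfl
  have hleib : ∀ x y : R, Dlin (x * y) = x • Dlin y + y • Dlin x := by
    intro x y
    have hsplit : σ (x * y) = algebraMap ℂ R (τ x) * σ y + algebraMap ℂ R (τ y) * σ x
        + σ x * σ y := by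
      simp only [hσ, hτ_mul, map_mul]
      ring
    have hπσ : π (σ (x * y)) = τ x • π (σ y) + τ y • π (σ x) := by
      rw [hsplit]
      rw [map_add, map_add, hπ_zero _ (Ideal.mul_mem_mul (hσ_mem x) (hσ_mem y)), add_zero]
      rw [← Algebra.smul_def, ← Algebra.smul_def, map_smul, map_smul]
    rw [hD, hD, hD, hπσ, map_add, map_smul, map_smul, smul_eq_mul, smul_eq_mul, map_add,
      map_mul, map_mul, hτ_mk, hτ_mk, hsmul, hsmul]
  let D : Derivation ℂ R (R ⧸ 𝔪) := Derivation.mk' Dlin hleib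
  have hDapp : ∀ x : R, D x = Dlin x := fun x => rfl
  -- lift to a derivation with values in R using projectivity of Ω
  have hproj : Module.Projective R (Ω[R⁄ℂ]) :=
    inferInstance
  have hsurj : Function.Surjective (Algebra.linearMap R (R ⧸ 𝔪)) := by
    intro y
    obtain ⟨x, rfl⟩ := Ideal.Quotient.mk_surjective y
    exact ⟨x, rfl⟩
  obtain ⟨h, hh⟩ := Module.projective_lifting_property (Algebra.linearMap R (R ⧸ 𝔪))
    D.liftKaehlerDifferential hsurj
  let ξ : Derivation ℂ R R := h.compDer (KaehlerDifferential.D ℂ R)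
  have hξ : ∀ x : R, Ideal.Quotient.mk 𝔪 (ξ x) = D x := by
    intro x
    have h1 : Ideal.Quotient.mk 𝔪 (ξ x)
        = (Algebra.linearMap R (R ⧸ 𝔪)) (h ((KaehlerDifferential.D ℂ R) x)) := rfl
    rw [h1, ← LinearMap.comp_apply, hh]
    exact D.liftKaehlerDifferential_comp_D x
  have hDg0 : D g = 0 := by
    rw [← hξ g]
    exact Ideal.Quotient.eq_zero_iff_mem.mpr (hder ξ)
  have hτg : τ g = 0 := by
    rw [hττ, Ideal.Quotient.eq_zero_iff_mem.mpr hg, map_zero]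
  have hDg1 : D g = algebraMap ℂ (R ⧸ 𝔪) 1 := by
    rw [hDapp, hD, hσ, hτg, map_zero, sub_zero, hℓ]
  rw [hDg0] at hDg1
  have : (1 : ℂ) = 0 := hbij.injective (by rw [map_zero, ← hDg1])
  exact one_ne_zero this

/-- Morse characterisation by powers of `f`.  `R` models the coordinate ring
`ℂ[D_t]` of a smooth affine complex variety (smoothness: `Algebra.FormallySmooth`,
affine of finite type: `Algebra.FiniteType`), `f ∈ R` a regular function and
`Jf = df(Der(R)) = {ξ(f) : ξ a derivation}` its Jacobian ideal; the hypothesis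
`FiniteDimensional ℂ (R ⧸ Jf)` says that `f` has finitely many critical points, all
isolated.  Then `f` is a Morse function — every critical point is non-degenerate
(the local Milnor algebra at each maximal ideal `𝔪 ⊇ Jf` is one-dimensional,
equivalently `𝔪 ⊆ Jf + 𝔪²`) and the critical values are pairwise distinct (two
critical points sharing the value `c` of `f` coincide) — if and only if the quotient
`R/Jf` is spanned over `ℂ` by the powers `1, f, f², …` of `f`. -/
theorem stmt0 (R : Type) [CommRing R] [Algebra ℂ R]
    [Algebra.FormallySmooth ℂ R] [Algebra.FiniteType ℂ R]
    (f : R) (Jf : Ideal R)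
    (hJf : Jf = Ideal.span {x : R | ∃ ξ : Derivation ℂ R R, ξ f = x})
    (hiso : FiniteDimensional ℂ (R ⧸ Jf)) :
    ((∀ 𝔪 : Ideal R, 𝔪.IsMaximal → Jf ≤ 𝔪 → 𝔪 ≤ Jf ⊔ 𝔪 * 𝔪) ∧
      (∀ 𝔪 𝔪' : Ideal R, 𝔪.IsMaximal → 𝔪'.IsMaximal → Jf ≤ 𝔪 → Jf ≤ 𝔪' →
        ∀ c : ℂ, f - algebraMap ℂ R c ∈ 𝔪 → f - algebraMap ℂ R c ∈ 𝔪' → 𝔪 = 𝔪')) ↔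
    Submodule.span ℂ (Set.range fun k : ℕ => (Ideal.Quotient.mk Jf f) ^ k) = ⊤ := by
  classical
  constructor
  · rintro ⟨ha, hb⟩
    haveI : Module.Finite ℂ (R ⧸ Jf) := hiso
    haveI hNoeth : IsNoetherianRing (R ⧸ Jf) :=
      isNoetherian_of_tower ℂ (inferInstance : IsNoetherian ℂ (R ⧸ Jf))
    haveI hArt : IsArtinianRing (R ⧸ Jf) := IsArtinianRing.of_finite ℂ (R ⧸ Jf)
    set a : R ⧸ Jf := Ideal.Quotient.mk Jf f with ha_def
    -- every maximal ideal of the quotient is idempotent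
    have hMM : ∀ M : Ideal (R ⧸ Jf), M.IsMaximal → M ≤ M * M := by
      intro M hM
      haveI := hM
      have hsurj : Function.Surjective (Ideal.Quotient.mk Jf) := Ideal.Quotient.mk_surjective
      set 𝔪 : Ideal R := Ideal.comap (Ideal.Quotient.mk Jf) M with h𝔪
      have h𝔪max : 𝔪.IsMaximal := Ideal.comap_isMaximal_of_surjective _ hsurj
      have hJle : Jf ≤ 𝔪 := by
        intro x hx
        simp only [h𝔪, Ideal.mem_comap, Ideal.Quotient.eq_zero_iff_mem.mpr hx]
        exact M.zero_mem
      have hstep := ha 𝔪 h𝔪max hJle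
      have hmap : M = Ideal.map (Ideal.Quotient.mk Jf) 𝔪 :=
        (Ideal.map_comap_of_surjective _ hsurj M).symm
      calc M = Ideal.map (Ideal.Quotient.mk Jf) 𝔪 := hmap
        _ ≤ Ideal.map (Ideal.Quotient.mk Jf) (Jf ⊔ 𝔪 * 𝔪) := Ideal.map_mono hstep
        _ = Ideal.map (Ideal.Quotient.mk Jf) Jf
            ⊔ Ideal.map (Ideal.Quotient.mk Jf) 𝔪 * Ideal.map (Ideal.Quotient.mk Jf) 𝔪 := by
              rw [Ideal.map_sup, Ideal.map_mul]
        _ = M * M := by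
              rw [Ideal.map_quotient_self, ← hmap, bot_sup_eq]
    -- the finite set of maximal ideals and residue characters
    haveI hfin : Finite {M : Ideal (R ⧸ Jf) // M.IsMaximal} :=
      (IsArtinianRing.setOfPred_isMaximal_finite (R ⧸ Jf)).to_subtype
    haveI : Fintype {M : Ideal (R ⧸ Jf) // M.IsMaximal} := Fintype.ofFinite _
    have hfd : ∀ M : {M : Ideal (R ⧸ Jf) // M.IsMaximal},
        FiniteDimensional ℂ ((R ⧸ Jf) ⧸ M.1) := fun M =>
      Module.Finite.of_surjective (Ideal.Quotient.mkₐ ℂ M.1).toLinearMap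
        (Ideal.Quotient.mkₐ_surjective ℂ M.1)
    have hbij : ∀ M : {M : Ideal (R ⧸ Jf) // M.IsMaximal},
        Function.Bijective (algebraMap ℂ ((R ⧸ Jf) ⧸ M.1)) := fun M => by
      haveI := hfd M
      exact aux_residue M.1 M.2
    let χ : ∀ M : {M : Ideal (R ⧸ Jf) // M.IsMaximal}, (R ⧸ Jf) → ℂ := fun M g =>
      (Equiv.ofBijective _ (hbij M)).symm (Ideal.Quotient.mk M.1 g)
    have hχ : ∀ M g, algebraMap ℂ ((R ⧸ Jf) ⧸ M.1) (χ M g) = Ideal.Quotient.mk M.1 g :=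
      fun M g => (Equiv.ofBijective _ (hbij M)).apply_symm_apply _
    let cval : {M : Ideal (R ⧸ Jf) // M.IsMaximal} → ℂ := fun M => χ M a
    have hc : ∀ M : {M : Ideal (R ⧸ Jf) // M.IsMaximal},
        algebraMap ℂ ((R ⧸ Jf) ⧸ M.1) (cval M) = Ideal.Quotient.mk M.1 a := fun M => hχ M a
    have hcmem : ∀ M : {M : Ideal (R ⧸ Jf) // M.IsMaximal},
        a - algebraMap ℂ (R ⧸ Jf) (cval M) ∈ M.1 := by
      intro M
      rw [← Ideal.Quotient.eq_zero_iff_mem, map_sub, Ideal.Quotient.mk_algebraMap,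
        hc, sub_self]
    -- pull back to R
    have hpull : ∀ M : {M : Ideal (R ⧸ Jf) // M.IsMaximal},
        (Ideal.comap (Ideal.Quotient.mk Jf) M.1).IsMaximal ∧
        Jf ≤ Ideal.comap (Ideal.Quotient.mk Jf) M.1 ∧
        f - algebraMap ℂ R (cval M) ∈ Ideal.comap (Ideal.Quotient.mk Jf) M.1 := by
      intro M
      haveI := M.2
      refine ⟨Ideal.comap_isMaximal_of_surjective _ Ideal.Quotient.mk_surjective, ?_, ?_⟩
      · intro x hx
        simp only [Ideal.mem_comap, Ideal.Quotient.eq_zero_iff_mem.mpr hx]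
        exact M.1.zero_mem
      · rw [Ideal.mem_comap, map_sub, Ideal.Quotient.mk_algebraMap]
        exact hcmem M
    have hinj : Function.Injective cval := by
      intro M M' hMM'
      obtain ⟨h1, h2, h3⟩ := hpull M
      obtain ⟨h1', h2', h3'⟩ := hpull M'
      have := hb _ _ h1 h1' h2 h2' (cval M) h3 (hMM' ▸ h3')
      have hMeq : M.1 = M'.1 := by
        rw [← Ideal.map_comap_of_surjective _ Ideal.Quotient.mk_surjective M.1,
          ← Ideal.map_comap_of_surjective _ Ideal.Quotient.mk_surjective M'.1, this]
      exact Subtype.ext hMeq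
    -- main argument: Lagrange interpolation
    rw [eq_top_iff]
    rintro g -
    set P : ℂ[X] := Lagrange.interpolate Finset.univ cval (fun M => χ M g) with hP
    have hgP : g - aeval a P = 0 := by
      apply aux_eq_zero hMM
      intro M hM
      set M' : {M : Ideal (R ⧸ Jf) // M.IsMaximal} := ⟨M, hM⟩
      rw [← Ideal.Quotient.eq_zero_iff_mem, map_sub]
      have e1 : Ideal.Quotient.mk M (aeval a P) = aeval (Ideal.Quotient.mk M a) P :=
        (aeval_algHom_apply (Ideal.Quotient.mkₐ ℂ M) a P).symm
      have e2 : Ideal.Quotient.mk M a = algebraMap ℂ ((R ⧸ Jf) ⧸ M) (cval M') :=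
        (hc M').symm
      have e3 : P.eval (cval M') = χ M' g :=
        Lagrange.eval_interpolate_at_node (fun M => χ M g) (hinj.injOn)
          (Finset.mem_univ M')
      have e4 : (algebraMap ℂ ((R ⧸ Jf) ⧸ M)) (χ M' g) = Ideal.Quotient.mk M g := hχ M' g
      rw [e1, e2, aeval_algebraMap_apply_eq_algebraMap_eval, e3, e4, sub_self]
    have : g = aeval a P := by rwa [sub_eq_zero] at hgP
    rw [this, aeval_eq_sum_range]
    exact Submodule.sum_mem _ fun i _ =>
      Submodule.smul_mem _ _ (Submodule.subset_span ⟨i, rfl⟩)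
  · intro hspan
    have hderJf : ∀ (ξ : Derivation ℂ R R), ξ f ∈ Jf := by
      intro ξ
      rw [hJf]
      exact Ideal.subset_span ⟨ξ, rfl⟩
    constructor
    · intro 𝔪 hm hJm
      haveI : FiniteDimensional ℂ (R ⧸ 𝔪) := by
        have h0 : ∀ x ∈ Jf, (Ideal.Quotient.mkₐ ℂ 𝔪) x = 0 := fun x hx =>
          Ideal.Quotient.eq_zero_iff_mem.mpr (hJm hx)
        refine Module.Finite.of_surjective
          (Ideal.Quotient.liftₐ Jf (Ideal.Quotient.mkₐ ℂ 𝔪) h0).toLinearMap ?_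
        intro y
        obtain ⟨x, rfl⟩ := Ideal.Quotient.mk_surjective y
        exact ⟨Ideal.Quotient.mk Jf x, by simp; rfl⟩
      have hbij := aux_residue 𝔪 hm
      obtain ⟨c, hc⟩ := hbij.2 (Ideal.Quotient.mk 𝔪 f)
      have hfc : f - algebraMap ℂ R c ∈ 𝔪 := by
        rw [← Ideal.Quotient.eq_zero_iff_mem, map_sub, Ideal.Quotient.mk_algebraMap,
          hc, sub_self]
      have hg2 : f - algebraMap ℂ R c ∈ 𝔪 * 𝔪 := by
        refine aux_smooth 𝔪 hm hbij hfc ?_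
        intro ξ
        have hξ : ξ (f - algebraMap ℂ R c) = ξ f := by simp
        rw [hξ]
        exact hJm (hderJf ξ)
      intro x hx
      obtain ⟨P, hPmem⟩ := aux_poly hspan x
      obtain ⟨Q, hQ⟩ := aux_split hm hJm hfc hx hPmem
      have hxeq : x = (x - (f - algebraMap ℂ R c) * aeval f Q)
          + (f - algebraMap ℂ R c) * aeval f Q := by ring
      rw [hxeq]
      exact Ideal.add_mem _ (Ideal.mem_sup_left hQ)
        (Ideal.mem_sup_right (Ideal.mul_mem_right _ _ hg2))
    · intro 𝔪 𝔪' hm hm' hJm hJm' c hc hc'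
      have hle : 𝔪 ≤ 𝔪' := by
        intro x hx
        obtain ⟨P, hPmem⟩ := aux_poly hspan x
        obtain ⟨Q, hQ⟩ := aux_split hm hJm hc hx hPmem
        have hxeq : x = (x - (f - algebraMap ℂ R c) * aeval f Q)
            + (f - algebraMap ℂ R c) * aeval f Q := by ring
        rw [hxeq]
        exact Ideal.add_mem _ (hJm' hQ) (Ideal.mul_mem_right _ _ hc')
      exact hm.eq_of_le hm'.ne_top hle
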